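/- Any PPT state ρ on C^d ⊗ C^d satisfies Tr(ρ P_+) ≤ 1/d, where P_+ is the projection onto the maximally entangled state. -/

import Mathlib

open scoped BigOperators ComplexConjugate ComplexOrder

noncomputable section

/-- The maximally entangled unit vector `ψ₊ = (1/√d) ∑ i, e i ⊗ e i`. -/
def maxEnt (d : ℕ) : Fin d × Fin d → ℂ :=
  fun p => if p.1 = p.2 then ((1 / Real.sqrt d : ℝ) : ℂ) else 0

/-- The projection `P₊ = |ψ₊⟩⟨ψ₊|`. -/
def Pplus (d : ℕ) : Matrix (Fin d × Fin d) (Fin d × Fin d) ℂ :=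
  fun p q => maxEnt d p * conj (maxEnt d q)

/-- The partial transpose on the second tensor factor. -/
def ptB {d : ℕ} (ρ : Matrix (Fin d × Fin d) (Fin d × Fin d) ℂ) :
    Matrix (Fin d × Fin d) (Fin d × Fin d) ℂ :=
  fun p q => ρ (p.1, q.2) (q.1, p.2)

/-- Off-diagonal entries of a PSD matrix are dominated by the diagonal:
`2 Re σ_{pq} ≤ σ_{pp} + σ_{qq}`. -/
theorem psd_re_bound {n : Type*} [Fintype n] [DecidableEq n] (σ : Matrix n n ℂ)
    (h : σ.PosSemidef) (p q : n) :
    2 * (σ p q).re ≤ (σ p p).re + (σ q q).re := by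
  have h1 := h.dotProduct_mulVec_nonneg (Pi.single p 1 - Pi.single q 1)
  have h2 : σ q p = starRingEnd ℂ (σ p q) := (h.1.apply q p).symm
  have e1 : ∀ r : n, star ((Pi.single r 1 : n → ℂ)) = (Pi.single r 1 : n → ℂ) := by
    intro r; funext i; simp [Pi.single_apply, apply_ite (star : ℂ → ℂ)]
  rw [star_sub, e1, e1, Matrix.mulVec_sub, Matrix.mulVec_single, Matrix.mulVec_single,
    sub_dotProduct, single_dotProduct, single_dotProduct] at h1
  simp only [Pi.sub_apply, mul_one, one_mul, MulOpposite.op_one, one_smul, Matrix.col_apply] at h1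
  rw [Complex.le_def] at h1
  simp only [Complex.zero_re, Complex.sub_re, h2, Complex.conj_re] at h1
  linarith [h1.1]

/-- The trace identity `Tr(ρ P₊) = (1/d) ∑_{i,j} ρ_{(i,i),(j,j)}`. -/
theorem trace_mul_Pplus (d : ℕ) (ρ : Matrix (Fin d × Fin d) (Fin d × Fin d) ℂ) :
    (ρ * Pplus d).trace
      = (((1:ℝ)/d : ℝ) : ℂ) * ∑ i : Fin d, ∑ j : Fin d, ρ (i,i) (j,j) := by
  rw [Matrix.trace]
  simp only [Matrix.diag, Matrix.mul_apply, Pplus, maxEnt, apply_ite (starRingEnd ℂ),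
    map_zero, Complex.conj_ofReal, mul_ite, ite_mul, mul_zero, zero_mul]
  rw [Fintype.sum_prod_type]
  simp only [Fintype.sum_prod_type]
  simp only [Finset.sum_ite_irrel, Finset.sum_const_zero, Finset.sum_ite_eq, Finset.sum_ite_eq',
    Finset.mem_univ, if_true]
  have hc : ((1/Real.sqrt d : ℝ):ℂ) * ((1/Real.sqrt d : ℝ):ℂ) = (((1:ℝ)/d : ℝ):ℂ) := by
    rw [← Complex.ofReal_mul, div_mul_div_comm, one_mul,
      Real.mul_self_sqrt (Nat.cast_nonneg d)]
  rw [Finset.mul_sum]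
  refine Finset.sum_congr rfl fun i _ => ?_
  rw [Finset.mul_sum]
  refine Finset.sum_congr rfl fun j _ => ?_
  rw [hc]; ring

/-- Any PPT state `ρ` on `ℂ^d ⊗ ℂ^d` satisfies `Tr(ρ P₊) ≤ 1/d`. -/
theorem ppt_singlet_fraction_bound (d : ℕ) (hd : 0 < d)
    (ρ : Matrix (Fin d × Fin d) (Fin d × Fin d) ℂ)
    (hpsd : ρ.PosSemidef) (htr : ρ.trace = 1)
    (hppt : (ptB ρ).PosSemidef) :
    (ρ * Pplus d).trace ≤ (((1 : ℝ) / d : ℝ) : ℂ) := by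
  set S : ℂ := ∑ i : Fin d, ∑ j : Fin d, ρ (i,i) (j,j) with hSdef
  -- imaginary part of S vanishes
  have him : S.im = 0 := by
    have hconj : starRingEnd ℂ S = S := by
      rw [hSdef, map_sum]
      simp only [map_sum]
      rw [Finset.sum_comm]
      refine Finset.sum_congr rfl fun a _ => Finset.sum_congr rfl fun b _ => ?_
      exact hpsd.1.apply (a,a) (b,b)
    have := congrArg Complex.im hconj
    simpa [Complex.conj_im, neg_eq_iff_add_eq_zero] using this
  -- real part of S is at most 1
  have hre : S.re ≤ 1 := by
    have hkey : ∀ i j : Fin d,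
        2 * (ρ (i,i) (j,j)).re ≤ (ptB ρ (i,j) (i,j)).re + (ptB ρ (j,i) (j,i)).re := by
      intro i j
      have := psd_re_bound (ptB ρ) hppt (i,j) (j,i)
      simpa [ptB] using this
    have hSre : S.re = ∑ i : Fin d, ∑ j : Fin d, (ρ (i,i) (j,j)).re := by
      rw [hSdef, Complex.re_sum]
      exact Finset.sum_congr rfl fun i _ => Complex.re_sum _ _
    have h2 : 2 * S.re ≤
        (∑ i : Fin d, ∑ j : Fin d, (ptB ρ (i,j) (i,j)).re)
          + ∑ i : Fin d, ∑ j : Fin d, (ptB ρ (j,i) (j,i)).re := by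
      rw [hSre, Finset.mul_sum, ← Finset.sum_add_distrib]
      refine Finset.sum_le_sum fun i _ => ?_
      rw [Finset.mul_sum, ← Finset.sum_add_distrib]
      exact Finset.sum_le_sum fun j _ => hkey i j
    have hswap : (∑ i : Fin d, ∑ j : Fin d, (ptB ρ (j,i) (j,i)).re)
        = ∑ i : Fin d, ∑ j : Fin d, (ptB ρ (i,j) (i,j)).re := Finset.sum_comm
    have hdiag : (∑ i : Fin d, ∑ j : Fin d, (ptB ρ (i,j) (i,j)).re) = 1 := by
      have htrσ : (ptB ρ).trace = 1 := by
        have : (ptB ρ).trace = ρ.trace := by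
          rw [Matrix.trace, Matrix.trace]
          exact Finset.sum_congr rfl fun p _ => rfl
        rw [this, htr]
      have hre1 : ∑ p : Fin d × Fin d, ((ptB ρ) p p).re = 1 := by
        have := congrArg Complex.re htrσ
        simpa [Matrix.trace, Matrix.diag, Complex.re_sum] using this
      rw [← hre1]
      exact (Fintype.sum_prod_type (fun p : Fin d × Fin d => (ptB ρ p p).re)).symm
    rw [hswap, hdiag] at h2
    linarith
  rw [trace_mul_Pplus d ρ, Complex.le_def]
  have hd0 : (0:ℝ) ≤ 1 / (d:ℝ) := by positivity
  constructor
  · simp only [Complex.mul_re, Complex.ofReal_re, Complex.ofReal_im, him, mul_zero, zero_mul,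
      sub_zero]
    calc ((1:ℝ)/d) * S.re ≤ ((1:ℝ)/d) * 1 := by
          exact mul_le_mul_of_nonneg_left hre hd0
      _ = (1:ℝ)/d := mul_one _
  · simp only [Complex.mul_im, Complex.ofReal_re, Complex.ofReal_im, zero_mul, add_zero]
    rw [show (∑ i : Fin d, ∑ j : Fin d, ρ (i, i) (j, j)).im = 0 from him, mul_zero]
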